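/- Let F be a convex class of probability measures on Ω and let T : F → A ⊆ ℝ^k be mixture-continuous and surjective onto A. If S : A × Ω → ℝ is strictly F-consistent for T, then for all F ∈ F the expected score S̄(·,F) : A → ℝ has exactly one local minimum, which is at x = T(F). -/
import Mathlib


open MeasureTheory ENNReal

noncomputable def escore {α Ω : Type*} [MeasurableSpace Ω]
    (S : α → Ω → ℝ) (x : α) (F : Measure Ω) : ℝ :=
  ∫ y, S x y ∂F

/-- The mixture `(1 - lam) • F + lam • G` of two measures. -/
noncomputable def mix {Ω : Type*} [MeasurableSpace Ω]
    (F G : Measure Ω) (lam : ℝ) : Measure Ω :=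
  ENNReal.ofReal (1 - lam) • F + ENNReal.ofReal lam • G

/-- The class `𝓕` is convex (closed under mixtures). -/
def MixConvex {Ω : Type*} [MeasurableSpace Ω] (𝓕 : Set (Measure Ω)) : Prop :=
  ∀ F ∈ 𝓕, ∀ G ∈ 𝓕, ∀ lam ∈ Set.Icc (0:ℝ) 1, mix F G lam ∈ 𝓕

/-- `S` is an `𝓕`-consistent scoring function for `T` on the action domain `A`. -/
def Consistent {α Ω : Type*} [MeasurableSpace Ω]
    (𝓕 : Set (Measure Ω)) (A : Set α) (T : Measure Ω → α) (S : α → Ω → ℝ) : Prop :=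
  ∀ F ∈ 𝓕, ∀ x ∈ A, escore S (T F) F ≤ escore S x F

/-- `S` is a strictly `𝓕`-consistent scoring function for `T` on the action domain `A`. -/
def StrictlyConsistent {α Ω : Type*} [MeasurableSpace Ω]
    (𝓕 : Set (Measure Ω)) (A : Set α) (T : Measure Ω → α) (S : α → Ω → ℝ) : Prop :=
  Consistent 𝓕 A T S ∧
    ∀ F ∈ 𝓕, ∀ x ∈ A, escore S x F = escore S (T F) F → x = T F

/-- `T` is mixture-continuous: `fun lam => T ((1-lam) • F + lam • G)` is continuous on `[0,1]`. -/
def MixContinuous {Ω : Type*} [MeasurableSpace Ω] {k : ℕ}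
    (𝓕 : Set (Measure Ω)) (T : Measure Ω → (Fin k → ℝ)) : Prop :=
  ∀ F ∈ 𝓕, ∀ G ∈ 𝓕, ContinuousOn (fun lam => T (mix F G lam)) (Set.Icc (0:ℝ) 1)


section
open Topology Filter

lemma escore_mix {α Ω : Type*} [MeasurableSpace Ω]
    (S : α → Ω → ℝ) (z : α) (F G : Measure Ω) {lam : ℝ}
    (h0 : 0 ≤ lam) (h1 : lam ≤ 1)
    (hF : Integrable (S z) F) (hG : Integrable (S z) G) :
    escore S z (mix F G lam) = (1 - lam) * escore S z F + lam * escore S z G := by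
  unfold escore mix
  rw [integral_add_measure (hF.smul_measure ENNReal.ofReal_ne_top)
        (hG.smul_measure ENNReal.ofReal_ne_top),
      integral_smul_measure, integral_smul_measure,
      ENNReal.toReal_ofReal h0, ENNReal.toReal_ofReal (by linarith : (0:ℝ) ≤ 1 - lam),
      smul_eq_mul, smul_eq_mul]

lemma mix_zero {Ω : Type*} [MeasurableSpace Ω] (F G : Measure Ω) : mix F G 0 = F := by
  simp [mix]

lemma mix_one {Ω : Type*} [MeasurableSpace Ω] (F G : Measure Ω) : mix F G 1 = G := by
  simp [mix]

/-- For a strictly `𝓕`-consistent scoring function `S` of a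
mixture-continuous surjective functional `T`, the expected score `S̄(·,F)` on `A` has
exactly one local minimum, namely at `x = T F`. -/
theorem statement3 {Ω : Type*} [MeasurableSpace Ω] {k : ℕ}
    (𝓕 : Set (Measure Ω)) (hprob : ∀ F ∈ 𝓕, IsProbabilityMeasure F)
    (hconv : MixConvex 𝓕)
    (A : Set (Fin k → ℝ)) (T : Measure Ω → (Fin k → ℝ))
    (hTA : ∀ F ∈ 𝓕, T F ∈ A)
    (hmix : MixContinuous 𝓕 T)
    (hsurj : ∀ x ∈ A, ∃ F ∈ 𝓕, T F = x)
    (S : (Fin k → ℝ) → Ω → ℝ)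
    (hSint : ∀ x ∈ A, ∀ F ∈ 𝓕, Integrable (S x) F)
    (hS : StrictlyConsistent 𝓕 A T S) :
    ∀ F ∈ 𝓕,
      IsLocalMinOn (fun z => escore S z F) A (T F) ∧
      ∀ x ∈ A, IsLocalMinOn (fun z => escore S z F) A x → x = T F := by

  intro F hF
  have hglob : IsMinOn (fun z => escore S z F) A (T F) := fun z hz => hS.1 F hF z hz
  refine ⟨hglob.localize, ?_⟩
  intro x hxA hloc
  by_contra hne
  obtain ⟨G, hG, hTG⟩ := hsurj x hxA
  set path : ℝ → (Fin k → ℝ) := fun lam => T (mix F G lam) with hpath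
  have hmem : ∀ lam ∈ Set.Icc (0:ℝ) 1, mix F G lam ∈ 𝓕 :=
    fun lam hl => hconv F hF G hG lam hl
  -- key inequality
  have key : ∀ lam ∈ Set.Ico (0:ℝ) 1, path lam ≠ x →
      escore S (path lam) F < escore S x F := by
    intro lam hl hne'
    have hl' : lam ∈ Set.Icc (0:ℝ) 1 := ⟨hl.1, hl.2.le⟩
    have hH := hmem lam hl'
    have hyA : path lam ∈ A := hTA _ hH
    have h1 : escore S (path lam) (mix F G lam) < escore S x (mix F G lam) := by
      rcases lt_or_eq_of_le (hS.1 _ hH x hxA) with h | h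
      · exact h
      · exact absurd (hS.2 _ hH x hxA h.symm).symm hne'
    rw [escore_mix S _ F G hl.1 hl.2.le (hSint _ hyA F hF) (hSint _ hyA G hG),
        escore_mix S _ F G hl.1 hl.2.le (hSint _ hxA F hF) (hSint _ hxA G hG)] at h1
    have h2 : escore S x G ≤ escore S (path lam) G := by
      have := hS.1 G hG (path lam) hyA
      rwa [hTG] at this
    nlinarith [hl.1, hl.2]
  -- the set of mixture parameters mapping to x
  set Z := {lam : ℝ | lam ∈ Set.Icc (0:ℝ) 1 ∧ path lam = x} with hZ
  have h1Z : (1:ℝ) ∈ Z := ⟨⟨zero_le_one, le_refl 1⟩, by simp [hpath, mix_one, hTG]⟩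
  have hZclosed : IsClosed Z := by
    have h := (hmix F hF G hG).preimage_isClosed_of_isClosed isClosed_Icc
      (isClosed_singleton (x := x))
    have : Z = Set.Icc (0:ℝ) 1 ∩ path ⁻¹' {x} := by
      ext lam; simp [hZ, Set.mem_inter_iff]
    rw [this]; exact h
  have hZbdd : BddBelow Z := ⟨0, fun z hz => hz.1.1⟩
  set c := sInf Z with hc
  have hcZ : c ∈ Z := hZclosed.csInf_mem ⟨1, h1Z⟩ hZbdd
  have hc1 : c ≤ 1 := hcZ.1.2
  have hc0 : 0 < c := by
    rcases lt_or_eq_of_le hcZ.1.1 with h | h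
    · exact h
    · exfalso
      have hx0 : path c = x := hcZ.2
      rw [← h] at hx0
      rw [hpath] at hx0
      simp only [mix_zero] at hx0
      exact hne hx0.symm
  -- points below c are not in Z
  have hbelow : ∀ lam ∈ Set.Ico (0:ℝ) c, path lam ≠ x := by
    intro lam hl hx
    exact absurd (csInf_le hZbdd ⟨⟨hl.1, hl.2.le.trans hc1⟩, hx⟩) (not_le.2 hl.2)
  -- neBot filter
  have hfilter : 𝓝[Set.Ico (0:ℝ) c] c = 𝓝[Set.Iio c] c := by
    rw [show Set.Ico (0:ℝ) c = Set.Ici 0 ∩ Set.Iio c from (Set.Ici_inter_Iio).symm]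
    exact nhdsWithin_inter_of_mem (mem_nhdsWithin_of_mem_nhds (Ici_mem_nhds hc0))
  have hneBot : (𝓝[Set.Ico (0:ℝ) c] c).NeBot := by
    rw [hfilter]; infer_instance
  -- continuity
  have hcont : ContinuousWithinAt path (Set.Icc (0:ℝ) 1) c := (hmix F hF G hG) c hcZ.1
  have htend : Filter.Tendsto path (𝓝[Set.Ico (0:ℝ) c] c) (𝓝 x) := by
    have h := hcont.mono (Set.Ico_subset_Icc_self.trans
      (Set.Icc_subset_Icc le_rfl hc1))
    have : path c = x := hcZ.2
    rw [← this]
    exact h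
  have htendA : Filter.Tendsto path (𝓝[Set.Ico (0:ℝ) c] c) (𝓝[A] x) := by
    rw [tendsto_nhdsWithin_iff]
    refine ⟨htend, Filter.eventually_of_mem self_mem_nhdsWithin fun lam hl => ?_⟩
    exact hTA _ (hmem lam ⟨hl.1, hl.2.le.trans hc1⟩)
  have hev : ∀ᶠ lam in 𝓝[Set.Ico (0:ℝ) c] c,
      escore S x F ≤ escore S (path lam) F := htendA.eventually hloc
  have hev2 : ∀ᶠ lam in 𝓝[Set.Ico (0:ℝ) c] c,
      escore S (path lam) F < escore S x F := by
    refine Filter.eventually_of_mem self_mem_nhdsWithin fun lam hl => ?_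
    exact key lam ⟨hl.1, lt_of_lt_of_le hl.2 hc1⟩ (hbelow lam hl)
  obtain ⟨lam, hle, hlt⟩ := (hev.and hev2).exists
  exact absurd hle (not_le.2 hlt)


end
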